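/- Define recursively C₁ to be the 4×4 matrix with −1 on the diagonal and 1 off the diagonal, and C_{α+1} the 4^{α+1} × 4^{α+1} block matrix with blocks −C_α on the diagonal and C_α off the diagonal. Then C_α² = 4^α · I for every α ≥ 1; in particular 2^{-α} C_α is a real symmetric orthogonal matrix. -/

import Mathlib

open Filter Topology Matrix

/-- Toeplitz's matrices: `toepT 1` is the `4 × 4` matrix with `-1` on the diagonal and `1`
off it, and `toepT (α+1)` is the `4 × 4` block matrix with blocks `-toepT α` on the
diagonal and `toepT α` off it (a Kronecker product with `toepT 1`); the index set of
`toepT α` is `Fin α → Fin 4`, of cardinality `4^α`. -/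
def toepT : (α : ℕ) → Matrix (Fin α → Fin 4) (Fin α → Fin 4) ℝ
  | 0 => 1
  | (α + 1) => fun i j =>
      (if i 0 = j 0 then (-1 : ℝ) else 1) *
        toepT α (fun k => i k.succ) (fun k => j k.succ)

lemma key_sum (i0 j0 : Fin 4) :
    ∑ k : Fin 4, (if i0 = k then (-1 : ℝ) else 1) * (if k = j0 then (-1 : ℝ) else 1)
      = if i0 = j0 then 4 else 0 := by
  fin_cases i0 <;> fin_cases j0 <;>
    simp [Fin.sum_univ_four] <;> norm_num

lemma toepT_symm (α : ℕ) : (toepT α)ᵀ = toepT α := by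
  induction α with
  | zero => simp [toepT]
  | succ n ih =>
    ext i j
    have h := congrFun (congrFun ih (fun k => i k.succ)) (fun k => j k.succ)
    simp only [transpose_apply] at h ⊢
    show toepT (n + 1) j i = toepT (n + 1) i j
    simp only [toepT]
    rw [h]
    congr 1
    simp [eq_comm]

lemma toepT_sq (α : ℕ) : toepT α * toepT α = ((4 : ℝ) ^ α) • 1 := by
  induction α with
  | zero => simp [toepT]
  | succ n ih =>
    ext i j
    rw [mul_apply]
    have hsum : ∑ k : Fin (n + 1) → Fin 4, toepT (n + 1) i k * toepT (n + 1) k j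
        = ∑ p : Fin 4 × (Fin n → Fin 4),
            toepT (n + 1) i (Fin.cons p.1 p.2) * toepT (n + 1) (Fin.cons p.1 p.2) j := by
      exact (Fintype.sum_equiv (Fin.consEquiv fun _ => Fin 4)
        (fun p => toepT (n + 1) i (Fin.consEquiv (fun _ => Fin 4) p) *
          toepT (n + 1) (Fin.consEquiv (fun _ => Fin 4) p) j)
        (fun k => toepT (n + 1) i k * toepT (n + 1) k j) (fun p => rfl)).symm
    rw [hsum, Fintype.sum_prod_type]
    have hterm : ∀ (k0 : Fin 4) (kt : Fin n → Fin 4),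
        toepT (n + 1) i (Fin.cons k0 kt) * toepT (n + 1) (Fin.cons k0 kt) j
          = ((if i 0 = k0 then (-1 : ℝ) else 1) * (if k0 = j 0 then (-1 : ℝ) else 1)) *
            (toepT n (fun k => i k.succ) kt * toepT n kt (fun k => j k.succ)) := by
      intro k0 kt
      simp only [toepT, Fin.cons_zero, Fin.cons_succ]
      ring
    simp only [hterm]
    rw [← Finset.sum_mul_sum]
    rw [key_sum]
    have h2 : ∑ kt : Fin n → Fin 4, toepT n (fun k => i k.succ) kt * toepT n kt (fun k => j k.succ)
        = ((4 : ℝ) ^ n) • (1 : Matrix (Fin n → Fin 4) (Fin n → Fin 4) ℝ)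
            (fun k => i k.succ) (fun k => j k.succ) := by
      rw [← mul_apply, ih]
      rfl
    rw [h2]
    simp only [Matrix.smul_apply, one_apply, smul_eq_mul]
    have hij : i = j ↔ (i 0 = j 0 ∧ (fun k : Fin n => i k.succ) = fun k => j k.succ) := by
      constructor
      · rintro rfl; exact ⟨rfl, rfl⟩
      · rintro ⟨h0, hs⟩
        funext k
        cases k using Fin.cases with
        | zero => exact h0
        | succ m => exact congrFun hs m
    by_cases h0 : i 0 = j 0 <;>
      by_cases hs : (fun k : Fin n => i k.succ) = fun k => j k.succ <;>
      simp [h0, hs, hij, pow_succ] <;> ring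

/-- `C_α² = 4^α · I` for every `α ≥ 1`; in particular `2^{-α} C_α` is a real
symmetric orthogonal matrix. -/
theorem statement13 (α : ℕ) (hα : 1 ≤ α) :
    toepT α * toepT α = ((4 : ℝ) ^ α) • 1 ∧
    (toepT α)ᵀ = toepT α ∧
    (((2 : ℝ) ^ α)⁻¹ • toepT α) * (((2 : ℝ) ^ α)⁻¹ • toepT α)ᵀ = 1 := by
  refine ⟨toepT_sq α, toepT_symm α, ?_⟩
  rw [transpose_smul, toepT_symm, smul_mul_assoc, mul_smul_comm, toepT_sq, smul_smul, smul_smul]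
  have h4 : (4 : ℝ) ^ α = 2 ^ α * 2 ^ α := by
    rw [← mul_pow]; norm_num
  rw [h4]
  have h2 : (2 : ℝ) ^ α ≠ 0 := by positivity
  rw [show ((2:ℝ)^α)⁻¹ * ((2:ℝ)^α)⁻¹ * (2^α * 2^α) = ((2:ℝ)^α)⁻¹ * 2^α * (((2:ℝ)^α)⁻¹ * 2^α) by ring,
    inv_mul_cancel₀ h2]
  simp
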